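/- Let k be a field and d ≥ 1 an integer such that char(k) does not divide 2d. Then the d-th Chebyshev polynomial φ_d, regarded as an element of k[X], is separable (i.e., coprime to its derivative, having d distinct roots in an algebraic closure of k). -/

import Mathlib

open Polynomial

/-- Degree facts for `dickson 1 1 n`. -/
theorem dickson_one_one_aux (R : Type*) [CommRing R] [Nontrivial R] :
    ∀ n : ℕ, (dickson 1 (1 : R) n).natDegree ≤ n ∧
      (1 ≤ n → (dickson 1 (1 : R) n).Monic ∧ (dickson 1 (1 : R) n).natDegree = n)
  | 0 => by
      constructor
      · rw [dickson_zero]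
        norm_num
      · omega
  | 1 => by
      rw [dickson_one]
      exact ⟨le_of_eq natDegree_X, fun _ => ⟨monic_X, natDegree_X⟩⟩
  | (n + 2) => by
      have h1 := dickson_one_one_aux R (n + 1)
      have h0 := dickson_one_one_aux R n
      obtain ⟨hm1, hd1⟩ := h1.2 (by omega)
      have hm : (X * dickson 1 (1 : R) (n + 1)).Monic := monic_X.mul hm1
      have hdeg : (X * dickson 1 (1 : R) (n + 1)).natDegree = n + 2 := by
        rw [monic_X.natDegree_mul hm1, natDegree_X, hd1]
        omega
      have hlt : (dickson 1 (1 : R) n).degree < (X * dickson 1 (1 : R) (n + 1)).degree := by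
        rw [degree_eq_natDegree hm.ne_zero, hdeg]
        calc (dickson 1 (1 : R) n).degree ≤ ((dickson 1 (1 : R) n).natDegree : WithBot ℕ) :=
              degree_le_natDegree
          _ < ((n + 2 : ℕ) : WithBot ℕ) := by
              exact_mod_cast Nat.lt_of_le_of_lt h0.1 (by omega)
      have key : dickson 1 (1 : R) (n + 2)
          = X * dickson 1 (1 : R) (n + 1) - dickson 1 (1 : R) n := by
        rw [dickson_add_two]; simp
      have hmonic : (dickson 1 (1 : R) (n + 2)).Monic := by
        rw [key]; exact hm.sub_of_left hlt
      have hnd : (dickson 1 (1 : R) (n + 2)).natDegree = n + 2 := by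
        rw [key]
        have := natDegree_sub_eq_left_of_natDegree_lt
          (p := X * dickson 1 (1 : R) (n + 1)) (q := dickson 1 (1 : R) n)
          (by rw [hdeg]; omega)
        rw [this, hdeg]
      exact ⟨le_of_eq hnd, fun _ => ⟨hmonic, hnd⟩⟩

/-- over a field `k` with `char k ∤ 2d` (and `d ≥ 1`), the `d`-th
Chebyshev polynomial `φ_d = dickson 1 1 d ∈ k[X]` is separable. -/
theorem stmt17 (k : Type*) [Field k] (d : ℕ) (hd : 1 ≤ d)
    (hchar : ¬ (ringChar k ∣ 2 * d)) :
    (Polynomial.dickson 1 (1 : k) d).Separable := by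
  classical
  set K := AlgebraicClosure k
  -- reduce to the algebraic closure
  rw [← separable_map (algebraMap k K), map_dickson, map_one]
  set φ : K[X] := dickson 1 (1 : K) d with hφ
  obtain ⟨hφm, hφd⟩ := (dickson_one_one_aux K d).2 hd
  -- basic char facts
  have h2d : ((2 * d : ℕ) : k) ≠ 0 := fun h => hchar ((ringChar.spec k (2 * d)).mp h)
  have h2dK : ((2 * d : ℕ) : K) ≠ 0 := by
    intro h
    apply h2d
    apply (algebraMap k K).injective
    rw [map_natCast, map_zero]
    exact h
  -- the polynomial X^(2d) + 1 over K
  set q : K[X] := X ^ (2 * d) - C (-1 : K) with hq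
  have hqsep : q.Separable := separable_X_pow_sub_C (-1) h2dK (neg_ne_zero.mpr one_ne_zero)
  have h2dne : 2 * d ≠ 0 := by omega
  have hqm : q.Monic := monic_X_pow_sub_C _ h2dne
  have hqsplits : q.Splits := IsAlgClosed.splits q
  have hqcard : Multiset.card q.roots = 2 * d := by
    have := hqsplits.natDegree_eq_card_roots
    rw [hq, natDegree_X_pow_sub_C] at this
    exact this.symm
  set T : Finset K := q.roots.toFinset with hT
  have hTnodup : q.roots.Nodup := nodup_roots hqsep
  have hTcard : T.card = 2 * d := by
    rw [hT, Multiset.toFinset_card_of_nodup hTnodup, hqcard]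
  -- elements of T satisfy s ^ (2d) = -1 and are nonzero
  have hroot : ∀ s ∈ T, s ^ (2 * d) = -1 := by
    intro s hs
    have : q.IsRoot s := isRoot_of_mem_roots (Multiset.mem_toFinset.mp hs)
    have h' : s ^ (2 * d) + 1 = 0 := by simpa [hq, sub_eq_zero] using this
    linear_combination h'
  have hne0 : ∀ s ∈ T, s ≠ 0 := by
    intro s hs h0
    have := hroot s hs
    rw [h0, zero_pow h2dne] at this
    exact (neg_ne_zero.mpr one_ne_zero) this.symm
  -- the map s ↦ s + s⁻¹
  set f : K → K := fun s => s + s⁻¹ with hf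
  -- fibers have at most 2 elements
  have hfiber : ∀ a ∈ T.image f, (T.filter fun s => f s = a).card ≤ 2 := by
    intro a _
    by_cases hne : (T.filter fun s => f s = a).Nonempty
    · obtain ⟨s₀, hs₀⟩ := hne
      have hs₀T : s₀ ∈ T := (Finset.mem_filter.mp hs₀).1
      have hs₀f : f s₀ = a := (Finset.mem_filter.mp hs₀).2
      have hsub : (T.filter fun s => f s = a) ⊆ {s₀, s₀⁻¹} := by
        intro t ht
        have htT : t ∈ T := (Finset.mem_filter.mp ht).1
        have htf : f t = a := (Finset.mem_filter.mp ht).2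
        have hs0 : s₀ ≠ 0 := hne0 s₀ hs₀T
        have ht0 : t ≠ 0 := hne0 t htT
        have heq : s₀ + s₀⁻¹ = t + t⁻¹ := by
          have h' : f s₀ = f t := hs₀f.trans htf.symm
          simpa [hf] using h'
        have key : (s₀ - t) * (s₀ * t - 1) = 0 := by
          have h1 := mul_inv_cancel₀ hs0; have h2 := mul_inv_cancel₀ ht0
          linear_combination (s₀ * t) * heq - t * h1 + s₀ * h2
        rcases mul_eq_zero.mp key with h | h
        · simp [sub_eq_zero.mp h]
        · have hst : s₀ * t = 1 := by linear_combination h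
          have : t = s₀⁻¹ := (inv_eq_of_mul_eq_one_right hst).symm
          simp [this]
      calc (T.filter fun s => f s = a).card ≤ ({s₀, s₀⁻¹} : Finset K).card :=
            Finset.card_le_card hsub
        _ ≤ 2 := Finset.card_insert_le _ _ |>.trans (by simp)
    · rw [Finset.not_nonempty_iff_eq_empty.mp hne]; simp
  have himcard : 2 * d ≤ 2 * (T.image f).card := by
    calc 2 * d = T.card := hTcard.symm
      _ ≤ 2 * (T.image f).card := Finset.card_le_mul_card_image T 2 hfiber
  have hdle : d ≤ (T.image f).card := by omega
  -- image elements are roots of φ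
  have hφne : φ ≠ 0 := hφm.ne_zero
  have himsub : T.image f ⊆ φ.roots.toFinset := by
    intro a ha
    obtain ⟨s, hsT, rfl⟩ := Finset.mem_image.mp ha
    have hs0 : s ≠ 0 := hne0 s hsT
    have hmul : s * s⁻¹ = 1 := mul_inv_cancel₀ hs0
    have heval : φ.eval (s + s⁻¹) = s ^ d + s⁻¹ ^ d := by
      rw [hφ]; exact dickson_one_one_eval_add_inv s s⁻¹ hmul d
    have hsd : (s ^ d) * (s ^ d) = -1 := by
      rw [← pow_add]
      have : d + d = 2 * d := by ring
      rw [this]; exact hroot s hsT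
    have hinv : (s ^ d)⁻¹ = -(s ^ d) := by
      apply inv_eq_of_mul_eq_one_right
      rw [mul_neg, hsd, neg_neg]
    have : φ.eval (s + s⁻¹) = 0 := by
      rw [heval, inv_pow, hinv]; ring
    rw [Multiset.mem_toFinset, mem_roots hφne]
    exact this
  -- conclude roots of φ are nodup
  have hrle : Multiset.card φ.roots ≤ d := by
    rw [← hφd]; exact card_roots' φ
  have hch : d ≤ φ.roots.toFinset.card :=
    hdle.trans (Finset.card_le_card himsub)
  have hnodup : φ.roots.Nodup := by
    have h1 : φ.roots.toFinset.card ≤ Multiset.card φ.roots := Multiset.toFinset_card_le _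
    have : φ.roots.dedup = φ.roots := by
      apply Multiset.eq_of_le_of_card_le (Multiset.dedup_le _)
      calc Multiset.card φ.roots ≤ d := hrle
        _ ≤ φ.roots.toFinset.card := hch
        _ = Multiset.card φ.roots.dedup := rfl
    rw [← Multiset.dedup_eq_self]; exact this
  rw [← nodup_roots_iff_of_splits hφne (IsAlgClosed.splits φ)]
  exact hnodup
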